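/- Let (A,[·,·]) be a 3-dimensional simple anticommutative algebra over an arbitrary field F. Then there exists a bijective linear map σ : A → A satisfying the Hom-Jacobi identity for [·,·], such that the induced bracket [x,y]' := σ^{-1}([x,y]) satisfies the Jacobi identity and the Lie algebra (A,[·,·]') is isomorphic to the 3-dimensional cross-product Lie algebra so(3,F), i.e. there is a basis e₁, e₂, e₃ of A with [e₁,e₂] = σ(e₃), [e₂,e₃] = σ(e₁), and [e₃,e₁] = σ(e₂). In other words, every simple anticommutative algebra of dimension 3 is the outside Yau twist of so(3,F) with respect to some bijective linear map. -/

import Mathlib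

private lemma fin3_mk_two (h : 2 < 3) : (⟨2, h⟩ : Fin 3) = 2 := rfl

set_option maxHeartbeats 1600000 in
/-- Every 3-dimensional simple anticommutative algebra `(A,[·,·])` is
the outside Yau twist of `so(3,F)` by a bijective linear map: there is a bijective
linear `σ` satisfying the Hom-Jacobi identity such that the induced bracket
`[x,y]' := σ⁻¹([x,y])` satisfies the Jacobi identity, and a basis `e₁,e₂,e₃` with
`[e₁,e₂] = σ(e₃)`, `[e₂,e₃] = σ(e₁)`, `[e₃,e₁] = σ(e₂)` (so `(A,[·,·]') ≅ so(3,F)`). -/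
theorem stmt18 (F : Type*) [Field F] (A : Type*) [AddCommGroup A] [Module F A]
    (hdim : Module.finrank F A = 3)
    (b : A →ₗ[F] A →ₗ[F] A)
    (halt : ∀ x : A, b x x = 0)
    (hnonab : b ≠ 0)
    (hsimple : ∀ I : Submodule F A, (∀ v ∈ I, ∀ w : A, b v w ∈ I) → I = ⊥ ∨ I = ⊤) :
    ∃ σ : A ≃ₗ[F] A,
      (∀ x y z : A, b (σ x) (b y z) + b (σ y) (b z x) + b (σ z) (b x y) = 0) ∧
      (∀ x y z : A,
        σ.symm (b x (σ.symm (b y z))) + σ.symm (b y (σ.symm (b z x))) +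
          σ.symm (b z (σ.symm (b x y))) = 0) ∧
      (∃ e : Module.Basis (Fin 3) F A,
        b (e 0) (e 1) = σ (e 2) ∧ b (e 1) (e 2) = σ (e 0) ∧ b (e 2) (e 0) = σ (e 1)) := by
  classical
  have hfd : FiniteDimensional F A := FiniteDimensional.of_finrank_eq_succ hdim
  -- antisymmetry
  have hskew : ∀ x y : A, b y x = - b x y := by
    intro x y
    have h := halt (x + y)
    simp only [map_add, LinearMap.add_apply, halt, zero_add, add_zero] at h
    -- h : b x y + b y x = 0
    exact eq_neg_of_add_eq_zero_left h
  -- a basis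
  set f : Module.Basis (Fin 3) F A := Module.finBasisOfFinrankEq F A hdim with hf
  -- the structure map T
  set g : Fin 3 → A := ![b (f 1) (f 2), b (f 2) (f 0), b (f 0) (f 1)] with hg
  set T : A →ₗ[F] A := f.constr F g with hTdef
  have hT0 : T (f 0) = b (f 1) (f 2) := by
    rw [hTdef, Module.Basis.constr_basis]; simp [hg]
  have hT1 : T (f 1) = b (f 2) (f 0) := by
    rw [hTdef, Module.Basis.constr_basis]; simp [hg]
  have hT2 : T (f 2) = b (f 0) (f 1) := by
    rw [hTdef, Module.Basis.constr_basis]; simp [hg]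
  -- every product lies in the range of T
  have hstep : ∀ (j : Fin 3) (y : A), b (f j) y ∈ LinearMap.range T := by
    intro j y
    have m2 : b (f 0) (f 1) ∈ LinearMap.range T := ⟨f 2, hT2⟩
    have m0 : b (f 1) (f 2) ∈ LinearMap.range T := ⟨f 0, hT0⟩
    have m1 : b (f 2) (f 0) ∈ LinearMap.range T := ⟨f 1, hT1⟩
    have m2' : b (f 1) (f 0) ∈ LinearMap.range T := by rw [hskew]; exact neg_mem m2
    have m0' : b (f 2) (f 1) ∈ LinearMap.range T := by rw [hskew]; exact neg_mem m0
    have m1' : b (f 0) (f 2) ∈ LinearMap.range T := by rw [hskew]; exact neg_mem m1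
    have md : ∀ i, b (f i) (f i) ∈ LinearMap.range T := fun i => by
      rw [halt]; exact zero_mem _
    rw [← f.sum_repr y, map_sum]
    refine Submodule.sum_mem _ (fun k _ => ?_)
    rw [map_smul]
    refine Submodule.smul_mem _ _ ?_
    fin_cases j <;> fin_cases k <;>
      first
        | exact md _ | exact m0 | exact m1 | exact m2
        | exact m0' | exact m1' | exact m2'
  have hgen : ∀ x y : A, b x y ∈ LinearMap.range T := by
    intro x y
    rw [← f.sum_repr x, map_sum]
    simp only [map_smul, LinearMap.sum_apply, LinearMap.smul_apply]
    exact Submodule.sum_mem _ fun j _ => Submodule.smul_mem _ _ (hstep j y)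
  -- the span of products is an invariant ideal
  set I : Submodule F A := Submodule.span F {z : A | ∃ x y : A, b x y = z} with hIdef
  have hIinv : ∀ v ∈ I, ∀ w : A, b v w ∈ I := by
    intro v hv w
    induction hv using Submodule.span_induction with
    | mem x hx => exact Submodule.subset_span ⟨x, w, rfl⟩
    | zero => simp only [map_zero, LinearMap.zero_apply]; exact zero_mem _
    | add x y hx hy ihx ihy =>
        rw [map_add]; exact add_mem ihx ihy
    | smul a x hx ihx =>
        rw [map_smul]; exact Submodule.smul_mem _ _ ihx
  have hItop : I = ⊤ := by
    rcases hsimple I hIinv with h | h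
    · exfalso
      apply hnonab
      ext x y
      have hxy : b x y ∈ I := Submodule.subset_span ⟨x, y, rfl⟩
      rw [h] at hxy
      simpa using hxy
    · exact h
  -- T is surjective, hence bijective
  have hTsurj : Function.Surjective T := by
    rw [← LinearMap.range_eq_top, ← top_le_iff, ← hItop]
    refine Submodule.span_le.2 ?_
    rintro z ⟨x, y, rfl⟩
    exact hgen x y
  have hTinj : Function.Injective T := LinearMap.injective_iff_surjective.2 hTsurj
  set σ : A ≃ₗ[F] A := LinearEquiv.ofBijective T ⟨hTinj, hTsurj⟩ with hσdef
  have hσ : ∀ x, σ x = T x := fun x => rfl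
  -- product relations in terms of σ
  have h01 : b (f 0) (f 1) = σ (f 2) := by rw [hσ, hT2]
  have h12 : b (f 1) (f 2) = σ (f 0) := by rw [hσ, hT0]
  have h20 : b (f 2) (f 0) = σ (f 1) := by rw [hσ, hT1]
  have h10 : b (f 1) (f 0) = - σ (f 2) := by rw [hskew, h01]
  have h21 : b (f 2) (f 1) = - σ (f 0) := by rw [hskew, h12]
  have h02 : b (f 0) (f 2) = - σ (f 1) := by rw [hskew, h20]
  clear_value σ T g f I
  clear hσdef hTdef hg hf hIdef hItop
  refine ⟨σ, ?_, ?_, ⟨f, h01, h12, h20⟩⟩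
  · -- Hom-Jacobi identity
    set J : A →ₗ[F] A →ₗ[F] A →ₗ[F] A := LinearMap.mk₂ F
      (fun x y => b (σ x) ∘ₗ b y + b (σ y) ∘ₗ b.flip x + b.flip (b x y) ∘ₗ (σ : A →ₗ[F] A))
      (by intro x₁ x₂ y; ext z; simp only [map_add, LinearMap.add_apply, LinearMap.comp_apply,
            LinearMap.flip_apply]; abel)
      (by intro c x y; ext z; simp only [map_smul, LinearMap.smul_apply, LinearMap.add_apply,
            LinearMap.comp_apply, LinearMap.flip_apply, smul_add])
      (by intro x y₁ y₂; ext z; simp only [map_add, LinearMap.add_apply, LinearMap.comp_apply,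
            LinearMap.flip_apply]; abel)
      (by intro c x y; ext z; simp only [map_smul, LinearMap.smul_apply, LinearMap.add_apply,
            LinearMap.comp_apply, LinearMap.flip_apply, smul_add])
      with hJdef
    have hJapp : ∀ x y z : A,
        J x y z = b (σ x) (b y z) + b (σ y) (b z x) + b (σ z) (b x y) := by
      intro x y z
      simp [hJdef, LinearMap.mk₂_apply, LinearMap.comp_apply, LinearMap.flip_apply]
    have hJ0 : J = 0 := by
      refine f.ext fun i => f.ext fun j => f.ext fun k => ?_
      rw [hJapp]
      fin_cases i <;> fin_cases j <;> fin_cases k <;>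
        simp only [Fin.mk_zero, Fin.mk_one, fin3_mk_two, halt, h01, h12, h20, h10, h21, h02,
          map_neg, map_zero, LinearMap.zero_apply, LinearMap.neg_apply] <;>
        abel
    intro x y z
    have := LinearMap.congr_fun (LinearMap.congr_fun (LinearMap.congr_fun hJ0 x) y) z
    rw [hJapp] at this
    simpa using this
  · -- Jacobi identity for the twisted bracket
    set s : A →ₗ[F] A := (σ.symm : A →ₗ[F] A) with hsdef
    set J' : A →ₗ[F] A →ₗ[F] A →ₗ[F] A := LinearMap.mk₂ F
      (fun x y => s ∘ₗ b x ∘ₗ s ∘ₗ b y + s ∘ₗ b y ∘ₗ s ∘ₗ b.flip x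
        + s ∘ₗ b.flip (s (b x y)))
      (by intro x₁ x₂ y; ext z; simp only [map_add, LinearMap.add_apply, LinearMap.comp_apply,
            LinearMap.flip_apply]; abel)
      (by intro c x y; ext z; simp only [map_smul, LinearMap.smul_apply, LinearMap.add_apply,
            LinearMap.comp_apply, LinearMap.flip_apply, smul_add])
      (by intro x y₁ y₂; ext z; simp only [map_add, LinearMap.add_apply, LinearMap.comp_apply,
            LinearMap.flip_apply]; abel)
      (by intro c x y; ext z; simp only [map_smul, LinearMap.smul_apply, LinearMap.add_apply,
            LinearMap.comp_apply, LinearMap.flip_apply, smul_add])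
      with hJ'def
    have hsapp : ∀ x, s x = σ.symm x := fun x => rfl
    have hJ'app : ∀ x y z : A,
        J' x y z = σ.symm (b x (σ.symm (b y z))) + σ.symm (b y (σ.symm (b z x)))
          + σ.symm (b z (σ.symm (b x y))) := by
      intro x y z
      simp [hJ'def, LinearMap.mk₂_apply, LinearMap.comp_apply, LinearMap.flip_apply, hsapp]
    have hJ'0 : J' = 0 := by
      refine f.ext fun i => f.ext fun j => f.ext fun k => ?_
      rw [hJ'app]
      fin_cases i <;> fin_cases j <;> fin_cases k <;>
        simp only [Fin.mk_zero, Fin.mk_one, fin3_mk_two, halt, h01, h12, h20, h10, h21, h02,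
          map_neg, map_zero, LinearMap.neg_apply, LinearMap.zero_apply,
          LinearEquiv.symm_apply_apply] <;>
        abel
    intro x y z
    have := LinearMap.congr_fun (LinearMap.congr_fun (LinearMap.congr_fun hJ'0 x) y) z
    rw [hJ'app] at this
    simpa using this
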